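/- For every a ∈ ℝ² in the interior of the first quadrant (a₁ > 0 and a₂ > 0) and every integer k ≥ 2, the set E¹_k(Σ₁, a) has at most k + 1 elements, where Σ₁ = {A₁, A₂}. -/

import Mathlib

open Matrix Set

noncomputable section

/-- `XSeq S a k` is the set of all vectors `T_{k-1} ⋯ T_0 · a` with each `T_j ∈ S`
(and `XSeq S a 0 = {a}`). -/
def XSeq {n : ℕ} (S : Set (Matrix (Fin n) (Fin n) ℝ)) (a : Fin n → ℝ) : ℕ → Set (Fin n → ℝ)
  | 0 => {a}
  | k + 1 => ⋃ A ∈ S, A.mulVec '' XSeq S a k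

/-- `PHull S a k` is the convex hull of `XSeq S a k`. -/
def PHull {n : ℕ} (S : Set (Matrix (Fin n) (Fin n) ℝ)) (a : Fin n → ℝ) (k : ℕ) :
    Set (Fin n → ℝ) :=
  convexHull ℝ (XSeq S a k)

/-- `EPts S a k` is the set of extreme points of `PHull S a k`. -/
def EPts {n : ℕ} (S : Set (Matrix (Fin n) (Fin n) ℝ)) (a : Fin n → ℝ) (k : ℕ) :
    Set (Fin n → ℝ) :=
  Set.extremePoints ℝ (PHull S a k)

/-- `NExt S a k` is the number of extreme points of `PHull S a k`. -/
def NExt {n : ℕ} (S : Set (Matrix (Fin n) (Fin n) ℝ)) (a : Fin n → ℝ) (k : ℕ) : ℕ :=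
  (EPts S a k).ncard

def M1 : Matrix (Fin 2) (Fin 2) ℝ := !![0, 1; 1, 0]
def M2 : Matrix (Fin 2) (Fin 2) ℝ := !![1, 1; 0, 1]
def M3 : Matrix (Fin 2) (Fin 2) ℝ := !![1, 0; 1, 1]
def M4 : Matrix (Fin 2) (Fin 2) ℝ := !![1, 1; 1, 0]
def M5 : Matrix (Fin 2) (Fin 2) ℝ := !![0, 1; 1, 1]

/-- Interior of the first quadrant. -/
def intQ1 : Set (Fin 2 → ℝ) := {c | 0 < c 0 ∧ 0 < c 1}
/-- Interior of the second quadrant. -/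
def intQ2 : Set (Fin 2 → ℝ) := {c | c 0 < 0 ∧ 0 < c 1}
/-- Interior of the third quadrant. -/
def intQ3 : Set (Fin 2 → ℝ) := {c | c 0 < 0 ∧ c 1 < 0}
/-- Interior of the fourth quadrant. -/
def intQ4 : Set (Fin 2 → ℝ) := {c | 0 < c 0 ∧ c 1 < 0}

/-- `EQuad S a k Q` is the set of extreme points of `PHull S a k` that maximize the linear
functional `x ↦ c ⬝ᵥ x` over `PHull S a k` for some `c ∈ Q`. -/
def EQuad (S : Set (Matrix (Fin 2) (Fin 2) ℝ)) (a : Fin 2 → ℝ) (k : ℕ)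
    (Q : Set (Fin 2 → ℝ)) : Set (Fin 2 → ℝ) :=
  {p ∈ EPts S a k | ∃ c ∈ Q, ∀ x ∈ PHull S a k, c ⬝ᵥ x ≤ c ⬝ᵥ p}

/-! ### Auxiliary material for `stmt10` -/

/-- The linear functional `x ↦ t * x 0 + x 1`. -/
def ffn (t : ℝ) (v : Fin 2 → ℝ) : ℝ := t * v 0 + v 1

/-- Points of `XSeq {M1, M2} a k` that maximize `ffn t` for some `t` in `I`. -/
def Vset (a : Fin 2 → ℝ) (k : ℕ) (I : Set ℝ) : Set (Fin 2 → ℝ) :=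
  {p | p ∈ XSeq {M1, M2} a k ∧
    ∃ t ∈ I, ∀ q ∈ XSeq {M1, M2} a k, ffn t q ≤ ffn t p}

lemma M1_mulVec (v : Fin 2 → ℝ) : M1.mulVec v = ![v 1, v 0] := by
  funext i
  fin_cases i <;>
    simp [M1, Matrix.mulVec, dotProduct, Fin.sum_univ_two]

lemma M2_mulVec (v : Fin 2 → ℝ) : M2.mulVec v = ![v 0 + v 1, v 1] := by
  funext i
  fin_cases i <;>
    simp [M2, Matrix.mulVec, dotProduct, Fin.sum_univ_two]

lemma mem_xseq_succ {a : Fin 2 → ℝ} {k : ℕ} {p : Fin 2 → ℝ} :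
    p ∈ XSeq {M1, M2} a (k + 1) ↔
      (∃ u ∈ XSeq {M1, M2} a k, M1.mulVec u = p) ∨
      (∃ u ∈ XSeq {M1, M2} a k, M2.mulVec u = p) := by
  simp [XSeq, Set.mem_iUnion, Set.mem_image]

lemma xseq_finite (a : Fin 2 → ℝ) : ∀ k, (XSeq {M1, M2} a k).Finite := by
  intro k
  induction k with
  | zero => simpa [XSeq] using Set.finite_singleton a
  | succ k ih =>
      have : XSeq {M1, M2} a (k + 1) ⊆
          M1.mulVec '' XSeq {M1, M2} a k ∪ M2.mulVec '' XSeq {M1, M2} a k := by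
        intro p hp
        rcases mem_xseq_succ.mp hp with ⟨u, hu, h⟩ | ⟨u, hu, h⟩
        · exact Or.inl ⟨u, hu, h⟩
        · exact Or.inr ⟨u, hu, h⟩
      exact ((ih.image _).union (ih.image _)).subset this

lemma xseq_pos {a : Fin 2 → ℝ} (ha : 0 < a 0 ∧ 0 < a 1) :
    ∀ k, ∀ p ∈ XSeq {M1, M2} a k, 0 < p 0 ∧ 0 < p 1 := by
  intro k
  induction k with
  | zero =>
      intro p hp
      have : p = a := by simpa [XSeq] using hp
      simpa [this] using ha
  | succ k ih =>
      intro p hp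
      rcases mem_xseq_succ.mp hp with ⟨u, hu, h⟩ | ⟨u, hu, h⟩
      · obtain ⟨h0, h1⟩ := ih u hu
        subst h
        constructor <;> simp [M1_mulVec, M1, Matrix.vecHead, Matrix.vecTail, h0, h1]
      · obtain ⟨h0, h1⟩ := ih u hu
        subst h
        constructor <;> simp [M2_mulVec, M2, Matrix.vecHead, Matrix.vecTail, h0, h1] <;> linarith

lemma vset_subset_xseq (a : Fin 2 → ℝ) (k : ℕ) (I : Set ℝ) :
    Vset a k I ⊆ XSeq {M1, M2} a k := fun _ hp => hp.1

lemma vset_finite (a : Fin 2 → ℝ) (k : ℕ) (I : Set ℝ) : (Vset a k I).Finite :=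
  (xseq_finite a k).subset (vset_subset_xseq a k I)

lemma vset_mono (a : Fin 2 → ℝ) (k : ℕ) {I J : Set ℝ} (h : I ⊆ J) :
    Vset a k I ⊆ Vset a k J := by
  rintro p ⟨hp, t, ht, hm⟩
  exact ⟨hp, t, h ht, hm⟩

/-- Overlap lemma: the sets of `(0,1)`-maximizers and `(1,∞)`-maximizers share at most
one point. -/
lemma vset_overlap (a : Fin 2 → ℝ) (k : ℕ) :
    (Vset a k (Set.Ioo 0 1) ∩ Vset a k (Set.Ioi 1)).Subsingleton := by
  rintro p ⟨⟨hpX, t₁, ht₁, h₁⟩, _, t₂, ht₂, h₂⟩ p' ⟨⟨hp'X, s₁, hs₁, g₁⟩, _, s₂, hs₂, g₂⟩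
  have A : ffn t₁ p' ≤ ffn t₁ p := h₁ p' hp'X
  have B : ffn t₂ p' ≤ ffn t₂ p := h₂ p' hp'X
  have C : ffn s₁ p ≤ ffn s₁ p' := g₁ p hpX
  have D : ffn s₂ p ≤ ffn s₂ p' := g₂ p hpX
  simp only [ffn] at A B C D
  obtain ⟨ht₁0, ht₁1⟩ := ht₁
  obtain ⟨hs₁0, hs₁1⟩ := hs₁
  have ht₂1 : (1:ℝ) < t₂ := ht₂
  have hs₂1 : (1:ℝ) < s₂ := hs₂
  set d : ℝ := p 0 - p' 0 with hd
  -- From A and D : (t₁ - s₂) * d ≥ 0, so d ≤ 0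
  have hAD : t₁ * d ≥ s₂ * d := by
    have h' : t₁ * d = (t₁ * p 0 + p 1) - (t₁ * p' 0 + p 1) := by ring
    have h'' : s₂ * d = (s₂ * p 0 + p 1) - (s₂ * p' 0 + p 1) := by ring
    nlinarith [A, D]
  have hdle : d ≤ 0 := by
    by_contra hcon
    push_neg at hcon
    have : t₁ * d < s₂ * d := by
      have := mul_lt_mul_of_pos_right (show t₁ < s₂ by linarith) hcon
      linarith
    linarith
  -- From B and C : (t₂ - s₁) * d ≥ 0, so d ≥ 0
  have hBC : t₂ * d ≥ s₁ * d := by nlinarith [B, C]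
  have hdge : 0 ≤ d := by
    by_contra hcon
    push_neg at hcon
    have : t₂ * d < s₁ * d := by
      have := mul_lt_mul_of_neg_right (show s₁ < t₂ by linarith) hcon
      linarith
    linarith
  have hd0 : d = 0 := le_antisymm hdle hdge
  have hp0 : p 0 = p' 0 := by simpa [hd, sub_eq_zero] using hd0
  have hp1 : p 1 = p' 1 := by
    have hA' : t₁ * p' 0 + p' 1 ≤ t₁ * p 0 + p 1 := A
    have hC' : s₁ * p 0 + p 1 ≤ s₁ * p' 0 + p' 1 := C
    rw [hp0] at hA' hC'
    linarith
  funext i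
  fin_cases i
  · exact hp0
  · exact hp1

lemma M1_mem_succ {a : Fin 2 → ℝ} {k : ℕ} {u : Fin 2 → ℝ}
    (hu : u ∈ XSeq {M1, M2} a k) : M1.mulVec u ∈ XSeq {M1, M2} a (k + 1) :=
  mem_xseq_succ.mpr (Or.inl ⟨u, hu, rfl⟩)

lemma M2_mem_succ {a : Fin 2 → ℝ} {k : ℕ} {u : Fin 2 → ℝ}
    (hu : u ∈ XSeq {M1, M2} a k) : M2.mulVec u ∈ XSeq {M1, M2} a (k + 1) :=
  mem_xseq_succ.mpr (Or.inr ⟨u, hu, rfl⟩)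

lemma ffn_M1 (t : ℝ) (v : Fin 2 → ℝ) : ffn t (M1.mulVec v) = t * v 1 + v 0 := by
  simp [ffn, M1_mulVec, M1, Matrix.vecHead, Matrix.vecTail] <;> ring

lemma ffn_M2 (t : ℝ) (v : Fin 2 → ℝ) : ffn t (M2.mulVec v) = t * (v 0 + v 1) + v 1 := by
  simp [ffn, M2_mulVec, M2, Matrix.vecHead, Matrix.vecTail] <;> ring

/-- The key recursion step. -/
lemma vset_step {a : Fin 2 → ℝ} (ha : 0 < a 0 ∧ 0 < a 1) (k : ℕ) :
    Vset a (k + 1) (Set.Ioi 0) ⊆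
      M2.mulVec '' Vset a k (Set.Ioo 0 1) ∪ M1.mulVec '' Vset a k (Set.Ioi 1) := by
  rintro p ⟨hpX, t, ht, hmax⟩
  have ht0 : (0:ℝ) < t := ht
  by_cases h2 : ∃ u ∈ XSeq {M1, M2} a k, M2.mulVec u = p
  · -- `M2` branch, transfer witness `t/(t+1)`
    obtain ⟨u, hu, hup⟩ := h2
    refine Or.inl ⟨u, ⟨hu, t / (t + 1), ⟨by positivity, ?_⟩, ?_⟩, hup⟩
    · rw [div_lt_one (by linarith)]; linarith
    · intro q hq
      have hqle : ffn t (M2.mulVec q) ≤ ffn t p := hmax _ (M2_mem_succ hq)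
      rw [← hup] at hqle
      rw [ffn_M2, ffn_M2] at hqle
      have key : ∀ x y : ℝ, (t / (t + 1)) * x + y = (t * (x + y) + y) / (t + 1) := by
        intro x y
        field_simp
        ring
      simp only [ffn, key]
      exact div_le_div_of_nonneg_right hqle (by linarith)
  · -- `M1` branch; first show `t < 1`
    have h1 : ∃ u ∈ XSeq {M1, M2} a k, M1.mulVec u = p := by
      rcases mem_xseq_succ.mp hpX with h | h
      · exact h
      · exact absurd h h2
    obtain ⟨u, hu, hup⟩ := h1
    obtain ⟨hu0, hu1⟩ := xseq_pos ha k u hu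
    have ht1 : t < 1 := by
      by_contra hcon
      push_neg at hcon
      have hle : ffn t (M2.mulVec u) ≤ ffn t p := hmax _ (M2_mem_succ hu)
      rw [← hup, ffn_M2, ffn_M1] at hle
      nlinarith
    refine Or.inr ⟨u, ⟨hu, 1 / t, ?_, ?_⟩, hup⟩
    · exact (one_lt_one_div ht0 ht1)
    · intro q hq
      have hqle : ffn t (M1.mulVec q) ≤ ffn t p := hmax _ (M1_mem_succ hq)
      rw [← hup] at hqle
      rw [ffn_M1, ffn_M1] at hqle
      have key : ∀ x y : ℝ, (1 / t) * x + y = (t * y + x) / t := by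
        intro x y
        field_simp
        ring
      simp only [ffn, key]
      exact div_le_div_of_nonneg_right hqle ht0.le

lemma vset_card {a : Fin 2 → ℝ} (ha : 0 < a 0 ∧ 0 < a 1) :
    ∀ k, (Vset a k (Set.Ioi 0)).ncard ≤ k + 1 := by
  intro k
  induction k with
  | zero =>
      have h : Vset a 0 (Set.Ioi 0) ⊆ {a} := by
        intro p hp
        simpa [XSeq] using hp.1
      calc (Vset a 0 (Set.Ioi 0)).ncard ≤ ({a} : Set (Fin 2 → ℝ)).ncard :=
            Set.ncard_le_ncard h (Set.finite_singleton a)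
        _ = 1 := Set.ncard_singleton a
  | succ k ih =>
      set A := Vset a k (Set.Ioo 0 1) with hA
      set B := Vset a k (Set.Ioi 1) with hB
      have hAfin : A.Finite := vset_finite a k _
      have hBfin : B.Finite := vset_finite a k _
      have hsub : Vset a (k + 1) (Set.Ioi 0) ⊆ M2.mulVec '' A ∪ M1.mulVec '' B :=
        vset_step ha k
      have hABsub : A ∪ B ⊆ Vset a k (Set.Ioi 0) := by
        apply Set.union_subset
        · exact vset_mono a k (fun x hx => hx.1)
        · exact vset_mono a k (fun x hx => Set.mem_Ioi.mpr (lt_trans one_pos (Set.mem_Ioi.mp hx)))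
      have hinter : (A ∩ B).ncard ≤ 1 := by
        rcases (vset_overlap a k).eq_empty_or_singleton with h | ⟨x, h⟩
        · simp [hA, hB, h]
        · simp [hA, hB, h]
      calc (Vset a (k + 1) (Set.Ioi 0)).ncard
          ≤ (M2.mulVec '' A ∪ M1.mulVec '' B).ncard :=
            Set.ncard_le_ncard hsub ((hAfin.image _).union (hBfin.image _))
        _ ≤ (M2.mulVec '' A).ncard + (M1.mulVec '' B).ncard := Set.ncard_union_le _ _
        _ ≤ A.ncard + B.ncard :=
            add_le_add (Set.ncard_image_le hAfin) (Set.ncard_image_le hBfin)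
        _ = (A ∩ B).ncard + (A ∪ B).ncard :=
            (Set.ncard_inter_add_ncard_union A B hAfin hBfin).symm
        _ ≤ 1 + (k + 1) :=
            add_le_add hinter
              ((Set.ncard_le_ncard hABsub (vset_finite a k _)).trans ih)
        _ = (k + 1) + 1 := by ring

/-- For `a` in the interior of the first quadrant and `k ≥ 2`,
`|E¹_k(Σ₁, a)| ≤ k + 1`. -/
theorem stmt10 (a : Fin 2 → ℝ) (ha : 0 < a 0 ∧ 0 < a 1) (k : ℕ) (hk : 2 ≤ k) :
    (EQuad {M1, M2} a k intQ1).ncard ≤ k + 1 := by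
  have hsub : EQuad {M1, M2} a k intQ1 ⊆ Vset a k (Set.Ioi 0) := by
    rintro p ⟨hpE, c, hcQ, hmax⟩
    obtain ⟨hc0, hc1⟩ : 0 < c 0 ∧ 0 < c 1 := hcQ
    have hpX : p ∈ XSeq {M1, M2} a k := extremePoints_convexHull_subset hpE
    refine ⟨hpX, c 0 / c 1, div_pos hc0 hc1, ?_⟩
    intro q hq
    have hq' : c ⬝ᵥ q ≤ c ⬝ᵥ p := hmax q (subset_convexHull ℝ _ hq)
    have e : ∀ x : Fin 2 → ℝ, c ⬝ᵥ x = c 0 * x 0 + c 1 * x 1 := by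
      intro x
      simp [dotProduct, Fin.sum_univ_two]
    rw [e q, e p] at hq'
    have key : ∀ x y : ℝ, (c 0 / c 1) * x + y = (c 0 * x + c 1 * y) / c 1 := by
      intro x y
      field_simp
    simp only [ffn, key]
    exact div_le_div_of_nonneg_right hq' hc1.le
  calc (EQuad {M1, M2} a k intQ1).ncard
      ≤ (Vset a k (Set.Ioi 0)).ncard := Set.ncard_le_ncard hsub (vset_finite a k _)
    _ ≤ k + 1 := vset_card ha k

end
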